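/- For every positive integer n and every non-negative integer k <= n-1, n divides C(2k,k) * sum_{i=0}^{k} [ C(n, k+i+1) + 4*C(n, k+i+2) ] * C(k+i, i) * C(k, i). -/

import Mathlib

open Finset

private lemma choose_q (a b c : ℕ) (h : b + c = a) :
    (a.choose b : ℚ) = a.factorial / (b.factorial * c.factorial) := by
  have hb : b ≤ a := by omega
  have h2 : a - b = c := by omega
  rw [eq_div_iff (by positivity)]
  have h3 := Nat.choose_mul_factorial_mul_factorial hb
  rw [h2] at h3
  have h4 : ((a.choose b : ℚ)) * (b.factorial : ℚ) * (c.factorial : ℚ) = (a.factorial : ℚ) := by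
    exact_mod_cast h3
  linear_combination h4

private lemma central_double (i : ℕ) :
    (2 * i + 2).choose (i + 1) = 2 * (2 * i + 1).choose i := by
  have h1 : (2 * i + 2).choose (i + 1) = (2 * i + 1).choose i + (2 * i + 1).choose (i + 1) := by
    have := Nat.choose_succ_succ (2 * i + 1) i
    simpa using this
  have h2 : (2 * i + 1).choose (i + 1) = (2 * i + 1).choose i := by
    have h3 : (2 * i + 1) - (i + 1) = i := by omega
    have h4 := (Nat.choose_symm (show i + 1 ≤ 2 * i + 1 by omega)).symm
    rw [h3] at h4
    exact h4
  omega

private lemma dvd_choose_mul (n m d : ℕ) (hn : 0 < n) (h : (m + 1) ∣ d) :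
    n ∣ n.choose (m + 1) * d := by
  obtain ⟨e, rfl⟩ := h
  refine ⟨(n - 1).choose m * e, ?_⟩
  have h1 := Nat.add_one_mul_choose_eq (n - 1) m
  have h2 : n - 1 + 1 = n := by omega
  rw [h2] at h1
  calc n.choose (m + 1) * ((m + 1) * e) = (n.choose (m + 1) * (m + 1)) * e := by ring
    _ = (n * (n - 1).choose m) * e := by rw [← h1]
    _ = n * ((n - 1).choose m * e) := by ring

/-- The key divisibility lemma:
`(k+i+2) ∣ C(2k,k)C(k+i+1,i+1)C(k,i+1) + 4 C(2k,k)C(k+i,i)C(k,i)`. -/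
private lemma key (k i : ℕ) :
    (k + i + 2) ∣ (2 * k).choose k * (k + (i + 1)).choose (i + 1) * k.choose (i + 1)
      + 4 * ((2 * k).choose k * (k + i).choose i * k.choose i) := by
  rcases Nat.lt_or_ge k (i + 1) with hki | hki
  · rcases Nat.lt_or_ge k i with hik | hik
    · -- i > k : both terms vanish
      have h1 : k.choose (i + 1) = 0 := Nat.choose_eq_zero_of_lt (by omega)
      have h2 : k.choose i = 0 := Nat.choose_eq_zero_of_lt (by omega)
      simp [h1, h2]
    · -- i = k
      have hik' : i = k := by omega
      subst hik'
      have h1 : i.choose (i + 1) = 0 := Nat.choose_eq_zero_of_lt (by omega)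
      have h2 : i.choose i = 1 := Nat.choose_self i
      have h3 : i + i = 2 * i := by ring
      obtain ⟨e, he⟩ := Nat.succ_dvd_centralBinom i
      have hc : (2 * i).choose i = (i + 1) * e := by
        have : i.centralBinom = (2 * i).choose i := rfl
        rw [this] at he
        exact he
      refine ⟨2 * e * ((i + 1) * e), ?_⟩
      rw [h1, h3, h2, hc]
      ring
  · rcases Nat.lt_or_ge k (i + 2) with hki2 | hki2
    · -- k = i + 1
      have hk' : k = i + 1 := by omega
      subst hk'
      have e1 : 2 * (i + 1) = 2 * i + 2 := by ring
      have e2 : i + 1 + (i + 1) = 2 * i + 2 := by ring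
      have e3 : i + 1 + i = 2 * i + 1 := by ring
      have h2 : (i + 1).choose (i + 1) = 1 := Nat.choose_self _
      have h3 : (i + 1).choose i = i + 1 := Nat.choose_succ_self_right i
      rw [e1, e2, e3, h2, h3, central_double]
      refine ⟨4 * (2 * i + 1).choose i ^ 2, ?_⟩
      ring
    · -- main case : k = i + t + 2
      obtain ⟨t, rfl⟩ : ∃ t, k = i + t + 2 := ⟨k - i - 2, by omega⟩
      rw [← Int.natCast_dvd_natCast]
      refine ⟨((2 * (i + t + 2)).choose (i + t + 2 + i + 1) : ℤ) *
            ((i + t + 2 + (i + 1)).choose (i + 1) : ℤ) ^ 2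
          + 4 * ((2 * (i + t + 2)).choose (i + t + 2 + i) : ℤ) *
            ((i + t + 2 + i).choose i : ℤ) ^ 2
          - ((2 * (i + t + 2)).choose (i + t + 2 + i + 2) : ℤ) *
            ((i + t + 2 + (i + 1)).choose (i + 1) : ℤ) ^ 2
          - 2 * ((2 * (i + t + 2)).choose (i + t + 2 + i) : ℤ) *
            ((i + t + 2 + i).choose i : ℤ) *
            ((i + t + 2 + (i + 1)).choose (i + 1) : ℤ), ?_⟩
      have hq : ((2 * (i + t + 2)).choose (i + t + 2) : ℚ) *
            ((i + t + 2 + (i + 1)).choose (i + 1) : ℚ) * ((i + t + 2).choose (i + 1) : ℚ)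
          + 4 * (((2 * (i + t + 2)).choose (i + t + 2) : ℚ) *
            ((i + t + 2 + i).choose i : ℚ) * ((i + t + 2).choose i : ℚ))
          = ((i + t + 2 + i + 2 : ℕ) : ℚ) *
            (((2 * (i + t + 2)).choose (i + t + 2 + i + 1) : ℚ) *
              ((i + t + 2 + (i + 1)).choose (i + 1) : ℚ) ^ 2
            + 4 * ((2 * (i + t + 2)).choose (i + t + 2 + i) : ℚ) *
              ((i + t + 2 + i).choose i : ℚ) ^ 2
            - ((2 * (i + t + 2)).choose (i + t + 2 + i + 2) : ℚ) *
              ((i + t + 2 + (i + 1)).choose (i + 1) : ℚ) ^ 2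
            - 2 * ((2 * (i + t + 2)).choose (i + t + 2 + i) : ℚ) *
              ((i + t + 2 + i).choose i : ℚ) *
              ((i + t + 2 + (i + 1)).choose (i + 1) : ℚ)) := by
        have f1 : ((2 * (i + t + 2)).choose (i + t + 2) : ℚ)
            = (2 * (i + t + 2)).factorial /
              ((i + t + 2).factorial * (i + t + 2).factorial) := choose_q _ _ _ (by ring)
        have f2 : ((i + t + 2 + (i + 1)).choose (i + 1) : ℚ)
            = (i + t + 2 + (i + 1)).factorial /
              ((i + 1).factorial * (i + t + 2).factorial) := choose_q _ _ _ (by ring)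
        have f3 : ((i + t + 2 + i).choose i : ℚ)
            = (i + t + 2 + i).factorial /
              (i.factorial * (i + t + 2).factorial) := choose_q _ _ _ (by ring)
        have f4 : ((i + t + 2).choose (i + 1) : ℚ)
            = (i + t + 2).factorial /
              ((i + 1).factorial * (t + 1).factorial) := choose_q _ _ _ (by ring)
        have f5 : ((i + t + 2).choose i : ℚ)
            = (i + t + 2).factorial /
              (i.factorial * (t + 2).factorial) := choose_q _ _ _ (by ring)
        have f6 : ((2 * (i + t + 2)).choose (i + t + 2 + i) : ℚ)
            = (2 * (i + t + 2)).factorial /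
              ((i + t + 2 + i).factorial * (t + 2).factorial) := choose_q _ _ _ (by ring)
        have f7 : ((2 * (i + t + 2)).choose (i + t + 2 + i + 1) : ℚ)
            = (2 * (i + t + 2)).factorial /
              ((i + t + 2 + i + 1).factorial * (t + 1).factorial) := choose_q _ _ _ (by ring)
        have f8 : ((2 * (i + t + 2)).choose (i + t + 2 + i + 2) : ℚ)
            = (2 * (i + t + 2)).factorial /
              ((i + t + 2 + i + 2).factorial * t.factorial) := choose_q _ _ _ (by ring)
        rw [f1, f2, f3, f4, f5, f6, f7, f8]
        have s1 : (i + t + 2 + (i + 1)).factorial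
            = (i + t + 2 + i + 1) * (i + t + 2 + i).factorial := by
          rw [show i + t + 2 + (i + 1) = (i + t + 2 + i) + 1 by ring, Nat.factorial_succ]
        have s2 : (i + t + 2 + i + 1).factorial
            = (i + t + 2 + i + 1) * (i + t + 2 + i).factorial := Nat.factorial_succ _
        have s3 : (i + t + 2 + i + 2).factorial
            = (i + t + 2 + i + 2) * ((i + t + 2 + i + 1) * (i + t + 2 + i).factorial) := by
          rw [show i + t + 2 + i + 2 = (i + t + 2 + i + 1) + 1 by ring, Nat.factorial_succ,
            Nat.factorial_succ]
        have s4 : (i + 1).factorial = (i + 1) * i.factorial := Nat.factorial_succ _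
        have s5 : (t + 1).factorial = (t + 1) * t.factorial := Nat.factorial_succ _
        have s6 : (t + 2).factorial = (t + 2) * ((t + 1) * t.factorial) := by
          rw [show t + 2 = (t + 1) + 1 by ring, Nat.factorial_succ, Nat.factorial_succ]
        rw [s1, s2, s3, s4, s5, s6]
        have hX : ((2 * (i + t + 2)).factorial : ℚ) ≠ 0 := by
          exact_mod_cast Nat.factorial_ne_zero _
        have hK : ((i + t + 2).factorial : ℚ) ≠ 0 := by
          exact_mod_cast Nat.factorial_ne_zero _
        have hP : ((i + t + 2 + i).factorial : ℚ) ≠ 0 := by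
          exact_mod_cast Nat.factorial_ne_zero _
        have hI : ((i.factorial : ℕ) : ℚ) ≠ 0 := by
          exact_mod_cast Nat.factorial_ne_zero i
        have hT : ((t.factorial : ℕ) : ℚ) ≠ 0 := by
          exact_mod_cast Nat.factorial_ne_zero t
        push_cast
        have ha : ((i : ℚ) + 1) ≠ 0 := by positivity
        have hb : ((t : ℚ) + 1) ≠ 0 := by positivity
        have hc2 : ((t : ℚ) + 2) ≠ 0 := by positivity
        have hd1 : ((i : ℚ) + t + 2 + i + 1) ≠ 0 := by positivity
        have hd2 : ((i : ℚ) + t + 2 + i + 2) ≠ 0 := by positivity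
        field_simp
        ring
      exact_mod_cast hq

theorem stmt_14 (n k : ℕ) (hn : 0 < n) (hk : k ≤ n - 1) :
    n ∣ (2 * k).choose k *
      ∑ i ∈ Finset.range (k + 1),
        (n.choose (k + i + 1) + 4 * n.choose (k + i + 2)) * (k + i).choose i * k.choose i := by
  set c : ℕ → ℕ := fun j => (2 * k).choose k * (k + j).choose j * k.choose j with hc
  have h1 : (2 * k).choose k *
      ∑ i ∈ Finset.range (k + 1),
        (n.choose (k + i + 1) + 4 * n.choose (k + i + 2)) * (k + i).choose i * k.choose i
      = ∑ i ∈ Finset.range (k + 1),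
        (n.choose (k + i + 1) * c i + 4 * (n.choose (k + i + 2) * c i)) := by
    rw [Finset.mul_sum]
    refine Finset.sum_congr rfl fun i _ => ?_
    simp only [hc]
    ring
  have h2 : ∑ i ∈ Finset.range (k + 1),
        (n.choose (k + i + 1) * c i + 4 * (n.choose (k + i + 2) * c i))
      = (∑ i ∈ Finset.range (k + 1), n.choose (k + i + 1) * c i)
        + ∑ i ∈ Finset.range (k + 1), 4 * (n.choose (k + i + 2) * c i) :=
    Finset.sum_add_distrib
  have h3 : (∑ i ∈ Finset.range (k + 1), n.choose (k + i + 1) * c i)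
      = (∑ i ∈ Finset.range k, n.choose (k + (i + 1) + 1) * c (i + 1))
        + n.choose (k + 0 + 1) * c 0 :=
    Finset.sum_range_succ' (fun i => n.choose (k + i + 1) * c i) k
  have hck : c (k + 1) = 0 := by
    simp only [hc]
    rw [Nat.choose_eq_zero_of_lt (show k < k + 1 by omega)]
    ring
  have h4 : (∑ i ∈ Finset.range k, n.choose (k + (i + 1) + 1) * c (i + 1))
      = ∑ i ∈ Finset.range (k + 1), n.choose (k + i + 2) * c (i + 1) := by
    rw [Finset.sum_range_succ, hck, Nat.mul_zero, Nat.add_zero]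
    refine Finset.sum_congr rfl fun i _ => ?_
    have he : k + (i + 1) + 1 = k + i + 2 := by omega
    rw [he]
  have h5 : (∑ i ∈ Finset.range (k + 1), n.choose (k + i + 2) * c (i + 1))
        + ∑ i ∈ Finset.range (k + 1), 4 * (n.choose (k + i + 2) * c i)
      = ∑ i ∈ Finset.range (k + 1), n.choose (k + i + 2) * (c (i + 1) + 4 * c i) := by
    rw [← Finset.sum_add_distrib]
    refine Finset.sum_congr rfl fun i _ => ?_
    ring
  rw [h1, h2, h3, h4, add_right_comm, h5]
  refine dvd_add ?_ ?_
  · refine Finset.dvd_sum fun i _ => ?_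
    rw [show k + i + 2 = (k + i + 1) + 1 by omega]
    refine dvd_choose_mul n (k + i + 1) _ hn ?_
    rw [show k + i + 1 + 1 = k + i + 2 by omega]
    exact key k i
  · -- n ∣ C(n,k+1) * c 0
    have hc0 : c 0 = (2 * k).choose k := by
      simp [hc]
    rw [show k + 0 + 1 = k + 1 by omega, hc0]
    refine dvd_choose_mul n k _ hn ?_
    exact Nat.succ_dvd_centralBinom k
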